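/- Suppose G(V,E) satisfies the sufficient condition for parameter f, and let F be the set of Byzantine faulty nodes with |F| ≤ f. Then in every execution of the Middle algorithm, lim_{t→∞} (U[t] − μ[t]) = 0 (convergence). -/

import Mathlib

open Finset Filter

variable {V : Type} [Fintype V] [DecidableEq V]

/-- Incoming neighbors of node `v` in the directed graph with edge set `E`. -/
def NinSet (E : Finset (V × V)) (v : V) : Finset V :=
  Finset.univ.filter (fun u => (u, v) ∈ E)

/-- `A ⇒ B`: there is a node in `B` with more than 1/3 of its incoming neighbors in `A`. -/
def ImpRel (E : Finset (V × V)) (A B : Finset V) : Prop :=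
  ∃ v ∈ B, (NinSet E v).card < 3 * ((NinSet E v) ∩ A).card

/-- `in(A ⇒ B)`: the set of nodes in `B` with more than 1/3 of incoming neighbors in `A`. -/
def inRel (E : Finset (V × V)) (A B : Finset V) : Finset V :=
  B.filter (fun v => (NinSet E v).card < 3 * ((NinSet E v) ∩ A).card)

/-- `A` propagates to `B` in `l` steps. -/
def PropagatesIn (E : Finset (V × V)) (A B : Finset V) (l : ℕ) : Prop :=
  0 < l ∧ ∃ As Bs : ℕ → Finset V,
    As 0 = A ∧ Bs 0 = B ∧ As l = A ∪ B ∧ Bs l = ∅ ∧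
    (∀ τ < l, Bs τ ≠ ∅) ∧
    (∀ τ < l, ImpRel E (As τ) (Bs τ) ∧
      As (τ + 1) = As τ ∪ inRel E (As τ) (Bs τ) ∧
      Bs (τ + 1) = Bs τ \ inRel E (As τ) (Bs τ))

/-- `A` propagates to `B` (in some number of steps). -/
def Propagates (E : Finset (V × V)) (A B : Finset V) : Prop :=
  ∃ l, PropagatesIn E A B l

/-- The sufficient condition for parameter `f`. -/
def SuffCond (E : Finset (V × V)) (f : ℕ) : Prop :=
  (∀ v : V, 3 * f ≤ (NinSet E v).card) ∧
  (∀ F L C R : Finset V,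
    F ∪ L ∪ C ∪ R = Finset.univ →
    Disjoint F L → Disjoint F C → Disjoint F R →
    Disjoint L C → Disjoint L R → Disjoint C R →
    L.Nonempty → R.Nonempty → F.card ≤ f →
    ImpRel E (C ∪ R) L ∨ ImpRel E (L ∪ C) R)

/-- The weight `a_i = 1/(|N_i^-| - 2⌊|N_i^-|/3⌋ + 1)` used in the Middle algorithm. -/
noncomputable def middleWeight (E : Finset (V × V)) (i : V) : ℝ :=
  (((NinSet E i).card - 2 * ((NinSet E i).card / 3) + 1 : ℕ) : ℝ)⁻¹

/-- `α = min_{i ∈ V} a_i`. -/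
noncomputable def alphaMin (E : Finset (V × V)) : ℝ :=
  ⨅ i : V, middleWeight E i

/-- An execution of the Middle algorithm on graph `E` with faulty set `F`. -/
structure MiddleExec (E : Finset (V × V)) (F : Finset V) where
  /-- `state i t` is the state `v_i[t]` (meaningful for fault-free `i`). -/
  state : V → ℕ → ℝ
  /-- `w t i j` is the value node `i` receives from `j ∈ N_i^-` in iteration `t ≥ 1`. -/
  w : ℕ → V → V → ℝ
  /-- the set `B` at node `i` in iteration `t`. -/
  Bs : ℕ → V → Finset V
  /-- the set `T` at node `i` in iteration `t`. -/
  Ts : ℕ → V → Finset V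
  /-- the set `M` at node `i` in iteration `t`. -/
  Ms : ℕ → V → Finset V
  w_honest : ∀ t, 1 ≤ t → ∀ i, i ∉ F → ∀ j ∈ NinSet E i, j ∉ F →
    w t i j = state j (t - 1)
  part_union : ∀ t, 1 ≤ t → ∀ i, i ∉ F → Bs t i ∪ Ts t i ∪ Ms t i = NinSet E i
  disj_BT : ∀ t, 1 ≤ t → ∀ i, i ∉ F → Disjoint (Bs t i) (Ts t i)
  disj_BM : ∀ t, 1 ≤ t → ∀ i, i ∉ F → Disjoint (Bs t i) (Ms t i)
  disj_TM : ∀ t, 1 ≤ t → ∀ i, i ∉ F → Disjoint (Ts t i) (Ms t i)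
  card_B : ∀ t, 1 ≤ t → ∀ i, i ∉ F → (Bs t i).card = (NinSet E i).card / 3
  card_T : ∀ t, 1 ≤ t → ∀ i, i ∉ F → (Ts t i).card = (NinSet E i).card / 3
  le_BM : ∀ t, 1 ≤ t → ∀ i, i ∉ F → ∀ j ∈ Bs t i, ∀ k ∈ Ms t i, w t i j ≤ w t i k
  le_MT : ∀ t, 1 ≤ t → ∀ i, i ∉ F → ∀ j ∈ Ms t i, ∀ k ∈ Ts t i, w t i j ≤ w t i k
  update : ∀ t, 1 ≤ t → ∀ i, i ∉ F →
    state i t = middleWeight E i * (state i (t - 1) + ∑ j ∈ Ms t i, w t i j)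

/-- `U[t]`: the maximum state among fault-free nodes at the end of iteration `t`. -/
noncomputable def Umax {E : Finset (V × V)} {F : Finset V}
    (exec : MiddleExec E F) (t : ℕ) : ℝ :=
  ⨆ i : {i : V // i ∉ F}, exec.state i.1 t

/-- `μ[t]`: the minimum state among fault-free nodes at the end of iteration `t`. -/
noncomputable def muMin {E : Finset (V × V)} {F : Finset V}
    (exec : MiddleExec E F) (t : ℕ) : ℝ :=
  ⨅ i : {i : V // i ∉ F}, exec.state i.1 t

section AuxBasic

variable {E : Finset (V × V)} {F : Finset V} {f : ℕ}

lemma middleWeight_pos (E : Finset (V × V)) (i : V) : 0 < middleWeight E i := by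
  unfold middleWeight
  have : (0:ℝ) < (((NinSet E i).card - 2 * ((NinSet E i).card / 3) + 1 : ℕ) : ℝ) := by
    exact_mod_cast Nat.succ_pos _
  positivity

lemma middleWeight_le_one (E : Finset (V × V)) (i : V) : middleWeight E i ≤ 1 := by
  unfold middleWeight
  rw [inv_le_one_iff₀]
  right
  exact_mod_cast Nat.succ_le_succ (Nat.zero_le _)

lemma alphaMin_pos (E : Finset (V × V)) [Nonempty V] : 0 < alphaMin E := by
  obtain ⟨i0, hi0⟩ := Finite.exists_min (middleWeight E)
  exact lt_of_lt_of_le (middleWeight_pos E i0) (le_ciInf hi0)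

lemma alphaMin_le (E : Finset (V × V)) (i : V) : alphaMin E ≤ middleWeight E i :=
  ciInf_le (Set.finite_range _).bddBelow i

lemma alphaMin_le_one (E : Finset (V × V)) [Nonempty V] : alphaMin E ≤ 1 := by
  obtain ⟨i⟩ := ‹Nonempty V›
  exact le_trans (alphaMin_le E i) (middleWeight_le_one E i)

variable (exec : MiddleExec E F) {i : V} {t : ℕ}

lemma Ms_subset (ht : 1 ≤ t) (hi : i ∉ F) : exec.Ms t i ⊆ NinSet E i := by
  intro x hx
  rw [← exec.part_union t ht i hi]
  exact mem_union_right _ hx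

lemma Bs_subset (ht : 1 ≤ t) (hi : i ∉ F) : exec.Bs t i ⊆ NinSet E i := by
  intro x hx
  rw [← exec.part_union t ht i hi]
  exact mem_union_left _ (mem_union_left _ hx)

lemma Ts_subset (ht : 1 ≤ t) (hi : i ∉ F) : exec.Ts t i ⊆ NinSet E i := by
  intro x hx
  rw [← exec.part_union t ht i hi]
  exact mem_union_left _ (mem_union_right _ hx)

lemma card_BTM (ht : 1 ≤ t) (hi : i ∉ F) :
    (exec.Bs t i).card + (exec.Ts t i).card + (exec.Ms t i).card = (NinSet E i).card := by
  have h1 : Disjoint (exec.Bs t i ∪ exec.Ts t i) (exec.Ms t i) :=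
    disjoint_union_left.mpr ⟨exec.disj_BM t ht i hi, exec.disj_TM t ht i hi⟩
  rw [← exec.part_union t ht i hi, card_union_of_disjoint h1,
    card_union_of_disjoint (exec.disj_BT t ht i hi)]

lemma card_Ms (ht : 1 ≤ t) (hi : i ∉ F) :
    (exec.Ms t i).card = (NinSet E i).card - 2 * ((NinSet E i).card / 3) := by
  have h := card_BTM exec ht hi
  have hB := exec.card_B t ht i hi
  have hT := exec.card_T t ht i hi
  omega

lemma middleWeight_mul (ht : 1 ≤ t) (hi : i ∉ F) :
    middleWeight E i * ((exec.Ms t i).card + 1) = 1 := by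
  have hc := card_Ms exec ht hi
  unfold middleWeight
  rw [hc]
  generalize (NinSet E i).card - 2 * ((NinSet E i).card / 3) = k
  push_cast
  rw [inv_mul_cancel₀]
  positivity

end AuxBasic
section AuxAvg

variable {V : Type} [DecidableEq V]

lemma avg_ge (a m c : ℝ) (s : Finset V) (g : V → ℝ) (v0 : ℝ)
    (hsum : a * (s.card + 1) = 1) (ha : 0 < a)
    (hg : ∀ j ∈ s, m ≤ g j) (hv0 : m + c ≤ v0) (hc : 0 ≤ c) :
    m + a * c ≤ a * (v0 + ∑ j ∈ s, g j) := by
  have h1 : (s.card : ℝ) * m ≤ ∑ j ∈ s, g j := by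
    have := Finset.card_nsmul_le_sum s g m hg
    simpa [nsmul_eq_mul] using this
  have h2 : (a * ((s.card:ℝ)+1)) * m = m := by rw [hsum, one_mul]
  have h3 := mul_le_mul_of_nonneg_left hv0 ha.le
  have h4 := mul_le_mul_of_nonneg_left h1 ha.le
  ring_nf at h2 h3 h4 ⊢
  linarith

lemma avg_ge' (a m c : ℝ) (s : Finset V) (g : V → ℝ) (v0 : ℝ) {j0 : V}
    (hsum : a * (s.card + 1) = 1) (ha : 0 < a)
    (hj0 : j0 ∈ s) (hgj0 : m + c ≤ g j0)
    (hg : ∀ j ∈ s, m ≤ g j) (hv0 : m ≤ v0) (hc : 0 ≤ c) :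
    m + a * c ≤ a * (v0 + ∑ j ∈ s, g j) := by
  have hsplit : g j0 + ∑ j ∈ s.erase j0, g j = ∑ j ∈ s, g j :=
    Finset.add_sum_erase s g hj0
  have h1 : ((s.erase j0).card : ℝ) * m ≤ ∑ j ∈ s.erase j0, g j := by
    have := Finset.card_nsmul_le_sum (s.erase j0) g m
      (fun j hj => hg j (Finset.mem_of_mem_erase hj))
    simpa [nsmul_eq_mul] using this
  have hcard : ((s.erase j0).card : ℝ) = (s.card : ℝ) - 1 := by
    rw [Finset.card_erase_of_mem hj0]
    have : 1 ≤ s.card := Finset.card_pos.mpr ⟨j0, hj0⟩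
    push_cast [Nat.cast_sub this]
    ring
  rw [hcard] at h1
  have h2 : (a * ((s.card:ℝ)+1)) * m = m := by rw [hsum, one_mul]
  have h3 := mul_le_mul_of_nonneg_left hv0 ha.le
  have h4 := mul_le_mul_of_nonneg_left h1 ha.le
  have h5 := mul_le_mul_of_nonneg_left hgj0 ha.le
  rw [← hsplit]
  ring_nf at h2 h3 h4 h5 ⊢
  linarith

lemma avg_le (a m c : ℝ) (s : Finset V) (g : V → ℝ) (v0 : ℝ)
    (hsum : a * (s.card + 1) = 1) (ha : 0 < a)
    (hg : ∀ j ∈ s, g j ≤ m) (hv0 : v0 ≤ m - c) (hc : 0 ≤ c) :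
    a * (v0 + ∑ j ∈ s, g j) ≤ m - a * c := by
  have h1 : ∑ j ∈ s, g j ≤ (s.card : ℝ) * m := by
    have := Finset.sum_le_card_nsmul s g m hg
    simpa [nsmul_eq_mul] using this
  have h2 : (a * ((s.card:ℝ)+1)) * m = m := by rw [hsum, one_mul]
  have h3 := mul_le_mul_of_nonneg_left hv0 ha.le
  have h4 := mul_le_mul_of_nonneg_left h1 ha.le
  ring_nf at h2 h3 h4 ⊢
  linarith

lemma avg_le' (a m c : ℝ) (s : Finset V) (g : V → ℝ) (v0 : ℝ) {j0 : V}
    (hsum : a * (s.card + 1) = 1) (ha : 0 < a)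
    (hj0 : j0 ∈ s) (hgj0 : g j0 ≤ m - c)
    (hg : ∀ j ∈ s, g j ≤ m) (hv0 : v0 ≤ m) (hc : 0 ≤ c) :
    a * (v0 + ∑ j ∈ s, g j) ≤ m - a * c := by
  have hsplit : g j0 + ∑ j ∈ s.erase j0, g j = ∑ j ∈ s, g j :=
    Finset.add_sum_erase s g hj0
  have h1 : ∑ j ∈ s.erase j0, g j ≤ ((s.erase j0).card : ℝ) * m := by
    have := Finset.sum_le_card_nsmul (s.erase j0) g m
      (fun j hj => hg j (Finset.mem_of_mem_erase hj))
    simpa [nsmul_eq_mul] using this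
  have hcard : ((s.erase j0).card : ℝ) = (s.card : ℝ) - 1 := by
    rw [Finset.card_erase_of_mem hj0]
    have : 1 ≤ s.card := Finset.card_pos.mpr ⟨j0, hj0⟩
    push_cast [Nat.cast_sub this]
    ring
  rw [hcard] at h1
  have h2 : (a * ((s.card:ℝ)+1)) * m = m := by rw [hsum, one_mul]
  have h3 := mul_le_mul_of_nonneg_left hv0 ha.le
  have h4 := mul_le_mul_of_nonneg_left h1 ha.le
  have h5 := mul_le_mul_of_nonneg_left hgj0 ha.le
  rw [← hsplit]
  ring_nf at h2 h3 h4 h5 ⊢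
  linarith

end AuxAvg
section AuxKey

variable {E : Finset (V × V)} {F : Finset V} {f : ℕ}
variable (exec : MiddleExec E F) {i : V} {t : ℕ}

lemma div3_le (d : ℕ) : 3 * (d / 3) ≤ d := by
  have := Nat.div_mul_le_self d 3
  omega

lemma key_low (ht : 1 ≤ t) (hi : i ∉ F) (A : Finset V)
    (hAhon : ∀ a ∈ A, a ∉ F)
    (hcard : (NinSet E i).card < 3 * ((NinSet E i) ∩ A).card)
    (x : ℝ) (hval : ∀ a ∈ A, x ≤ exec.state a (t - 1)) :
    ∃ j ∈ exec.Ms t i, x ≤ exec.w t i j := by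
  have hT := exec.card_T t ht i hi
  have hd3 := div3_le (NinSet E i).card
  have hlt : (exec.Ts t i).card < ((NinSet E i) ∩ A).card := by omega
  have hnot : ¬ ((NinSet E i) ∩ A ⊆ exec.Ts t i) := fun h =>
    absurd (card_le_card h) (not_le.mpr hlt)
  obtain ⟨a, haNA, haT⟩ := not_subset.mp hnot
  have haN : a ∈ NinSet E i := (mem_inter.mp haNA).1
  have haA : a ∈ A := (mem_inter.mp haNA).2
  have hwa : exec.w t i a = exec.state a (t - 1) :=
    exec.w_honest t ht i hi a haN (hAhon a haA)
  have hxa : x ≤ exec.w t i a := hwa ▸ hval a haA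
  have haBTM : a ∈ exec.Bs t i ∪ exec.Ts t i ∪ exec.Ms t i := by
    rw [exec.part_union t ht i hi]; exact haN
  rcases mem_union.mp haBTM with hBT | hM
  · rcases mem_union.mp hBT with hB | hT'
    · -- a in B: M nonempty, all of M ≥ w a
      have hMne : (exec.Ms t i).Nonempty := by
        rw [← card_pos, card_Ms exec ht hi]
        have hB1 : 1 ≤ (exec.Bs t i).card := card_pos.mpr ⟨a, hB⟩
        rw [exec.card_B t ht i hi] at hB1
        omega
      obtain ⟨j, hj⟩ := hMne
      exact ⟨j, hj, le_trans hxa (exec.le_BM t ht i hi a hB j hj)⟩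
    · exact absurd hT' haT
  · exact ⟨a, hM, hxa⟩

lemma key_high (ht : 1 ≤ t) (hi : i ∉ F) (A : Finset V)
    (hAhon : ∀ a ∈ A, a ∉ F)
    (hcard : (NinSet E i).card < 3 * ((NinSet E i) ∩ A).card)
    (x : ℝ) (hval : ∀ a ∈ A, exec.state a (t - 1) ≤ x) :
    ∃ j ∈ exec.Ms t i, exec.w t i j ≤ x := by
  have hB := exec.card_B t ht i hi
  have hd3 := div3_le (NinSet E i).card
  have hlt : (exec.Bs t i).card < ((NinSet E i) ∩ A).card := by omega
  have hnot : ¬ ((NinSet E i) ∩ A ⊆ exec.Bs t i) := fun h =>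
    absurd (card_le_card h) (not_le.mpr hlt)
  obtain ⟨a, haNA, haB⟩ := not_subset.mp hnot
  have haN : a ∈ NinSet E i := (mem_inter.mp haNA).1
  have haA : a ∈ A := (mem_inter.mp haNA).2
  have hwa : exec.w t i a = exec.state a (t - 1) :=
    exec.w_honest t ht i hi a haN (hAhon a haA)
  have hxa : exec.w t i a ≤ x := hwa ▸ hval a haA
  have haBTM : a ∈ exec.Bs t i ∪ exec.Ts t i ∪ exec.Ms t i := by
    rw [exec.part_union t ht i hi]; exact haN
  rcases mem_union.mp haBTM with hBT | hM
  · rcases mem_union.mp hBT with hB' | hT'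
    · exact absurd hB' haB
    · have hMne : (exec.Ms t i).Nonempty := by
        rw [← card_pos, card_Ms exec ht hi]
        have hT1 : 1 ≤ (exec.Ts t i).card := card_pos.mpr ⟨a, hT'⟩
        rw [exec.card_T t ht i hi] at hT1
        omega
      obtain ⟨j, hj⟩ := hMne
      exact ⟨j, hj, le_trans (exec.le_MT t ht i hi j hj a hT') hxa⟩
  · exact ⟨a, hM, hxa⟩

end AuxKey
section AuxBounds

variable {E : Finset (V × V)} {F : Finset V} {f : ℕ}
variable (exec : MiddleExec E F)

lemma state_le_Umax (t : ℕ) (i : V) (hi : i ∉ F) : exec.state i t ≤ Umax exec t := by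
  unfold Umax
  exact le_ciSup (f := fun i : {i : V // i ∉ F} => exec.state i.1 t) (Set.finite_range _).bddAbove (⟨i, hi⟩ : {i : V // i ∉ F})

lemma muMin_le_state (t : ℕ) (i : V) (hi : i ∉ F) : muMin exec t ≤ exec.state i t := by
  unfold muMin
  exact ciInf_le (f := fun i : {i : V // i ∉ F} => exec.state i.1 t) (Set.finite_range _).bddBelow (⟨i, hi⟩ : {i : V // i ∉ F})

variable {i : V} {t : ℕ}

lemma w_low (hd : ∀ v : V, 3 * f ≤ (NinSet E v).card) (hF : F.card ≤ f)
    (ht : 1 ≤ t) (hi : i ∉ F) {j : V} (hj : j ∈ exec.Ms t i) :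
    muMin exec (t - 1) ≤ exec.w t i j := by
  by_cases hB : ∃ b ∈ exec.Bs t i, b ∉ F
  · obtain ⟨b, hbB, hbF⟩ := hB
    have h1 : exec.w t i b = exec.state b (t - 1) :=
      exec.w_honest t ht i hi b (Bs_subset exec ht hi hbB) hbF
    calc muMin exec (t - 1) ≤ exec.state b (t - 1) := muMin_le_state exec _ b hbF
    _ = exec.w t i b := h1.symm
    _ ≤ exec.w t i j := exec.le_BM t ht i hi b hbB j hj
  · push_neg at hB
    have hBsub : exec.Bs t i ⊆ NinSet E i ∩ F := fun b hb =>
      mem_inter.mpr ⟨Bs_subset exec ht hi hb, hB b hb⟩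
    have hcard : (NinSet E i ∩ F).card ≤ (exec.Bs t i).card := by
      rw [exec.card_B t ht i hi]
      have h1 : (NinSet E i ∩ F).card ≤ F.card := card_le_card inter_subset_right
      have h2 : 3 * f ≤ (NinSet E i).card := hd i
      have h3 : f ≤ (NinSet E i).card / 3 := Nat.le_div_iff_mul_le (by norm_num) |>.mpr (by omega)
      omega
    have hBeq : exec.Bs t i = NinSet E i ∩ F := eq_of_subset_of_card_le hBsub hcard
    have hjN : j ∈ NinSet E i := Ms_subset exec ht hi hj
    have hjF : j ∉ F := by
      intro hjF
      have : j ∈ exec.Bs t i := hBeq ▸ mem_inter.mpr ⟨hjN, hjF⟩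
      exact (disjoint_right.mp (exec.disj_BM t ht i hi) hj) this
    rw [exec.w_honest t ht i hi j hjN hjF]
    exact muMin_le_state exec _ j hjF

lemma w_high (hd : ∀ v : V, 3 * f ≤ (NinSet E v).card) (hF : F.card ≤ f)
    (ht : 1 ≤ t) (hi : i ∉ F) {j : V} (hj : j ∈ exec.Ms t i) :
    exec.w t i j ≤ Umax exec (t - 1) := by
  by_cases hT : ∃ b ∈ exec.Ts t i, b ∉ F
  · obtain ⟨b, hbT, hbF⟩ := hT
    have h1 : exec.w t i b = exec.state b (t - 1) :=
      exec.w_honest t ht i hi b (Ts_subset exec ht hi hbT) hbF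
    calc exec.w t i j ≤ exec.w t i b := exec.le_MT t ht i hi j hj b hbT
    _ = exec.state b (t - 1) := h1
    _ ≤ Umax exec (t - 1) := state_le_Umax exec _ b hbF
  · push_neg at hT
    have hTsub : exec.Ts t i ⊆ NinSet E i ∩ F := fun b hb =>
      mem_inter.mpr ⟨Ts_subset exec ht hi hb, hT b hb⟩
    have hcard : (NinSet E i ∩ F).card ≤ (exec.Ts t i).card := by
      rw [exec.card_T t ht i hi]
      have h1 : (NinSet E i ∩ F).card ≤ F.card := card_le_card inter_subset_right
      have h2 : 3 * f ≤ (NinSet E i).card := hd i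
      have h3 : f ≤ (NinSet E i).card / 3 := Nat.le_div_iff_mul_le (by norm_num) |>.mpr (by omega)
      omega
    have hTeq : exec.Ts t i = NinSet E i ∩ F := eq_of_subset_of_card_le hTsub hcard
    have hjN : j ∈ NinSet E i := Ms_subset exec ht hi hj
    have hjF : j ∉ F := by
      intro hjF
      have : j ∈ exec.Ts t i := hTeq ▸ mem_inter.mpr ⟨hjN, hjF⟩
      exact (disjoint_left.mp (exec.disj_TM t ht i hi) this) hj
    rw [exec.w_honest t ht i hi j hjN hjF]
    exact state_le_Umax exec _ j hjF

end AuxBounds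
section AuxPull

variable {E : Finset (V × V)} {F : Finset V} {f : ℕ}
variable (exec : MiddleExec E F)
variable (hd : ∀ v : V, 3 * f ≤ (NinSet E v).card) (hF : F.card ≤ f)
include hd hF

lemma state_low {i : V} {t : ℕ} (ht : 1 ≤ t) (hi : i ∉ F) :
    muMin exec (t - 1) ≤ exec.state i t := by
  rw [exec.update t ht i hi]
  have h := avg_ge (middleWeight E i) (muMin exec (t - 1)) 0 (exec.Ms t i)
    (exec.w t i) (exec.state i (t - 1)) (middleWeight_mul exec ht hi)
    (middleWeight_pos E i) (fun j hj => w_low exec hd hF ht hi hj)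
    (by simpa using muMin_le_state exec (t - 1) i hi) le_rfl
  simpa using h

lemma state_high {i : V} {t : ℕ} (ht : 1 ≤ t) (hi : i ∉ F) :
    exec.state i t ≤ Umax exec (t - 1) := by
  rw [exec.update t ht i hi]
  have h := avg_le (middleWeight E i) (Umax exec (t - 1)) 0 (exec.Ms t i)
    (exec.w t i) (exec.state i (t - 1)) (middleWeight_mul exec ht hi)
    (middleWeight_pos E i) (fun j hj => w_high exec hd hF ht hi hj)
    (by simpa using state_le_Umax exec (t - 1) i hi) le_rfl
  simpa using h

variable [Nonempty {i : V // i ∉ F}]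

lemma Umax_antitone : Antitone (Umax exec) := by
  apply antitone_nat_of_succ_le
  intro t
  apply ciSup_le
  rintro ⟨i, hi⟩
  have := state_high exec hd hF (t := t + 1) (Nat.le_add_left 1 t) hi
  simpa using this

lemma muMin_monotone : Monotone (muMin exec) := by
  apply monotone_nat_of_le_succ
  intro t
  apply le_ciInf
  rintro ⟨i, hi⟩
  have := state_low exec hd hF (t := t + 1) (Nat.le_add_left 1 t) hi
  simpa using this

lemma muMin_le_Umax (t : ℕ) : muMin exec t ≤ Umax exec t := by
  obtain ⟨⟨i, hi⟩⟩ := ‹Nonempty {i : V // i ∉ F}›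
  exact le_trans (muMin_le_state exec t i hi) (state_le_Umax exec t i hi)

lemma pull_low_self {i : V} {t : ℕ} (ht : 1 ≤ t) (hi : i ∉ F)
    {m c : ℝ} (hc : 0 ≤ c) (hm : m ≤ muMin exec (t - 1))
    (hs : m + c ≤ exec.state i (t - 1)) :
    m + alphaMin E * c ≤ exec.state i t := by
  rw [exec.update t ht i hi]
  have h := avg_ge (middleWeight E i) m c (exec.Ms t i)
    (exec.w t i) (exec.state i (t - 1)) (middleWeight_mul exec ht hi)
    (middleWeight_pos E i) (fun j hj => le_trans hm (w_low exec hd hF ht hi hj))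
    hs hc
  have h2 : alphaMin E * c ≤ middleWeight E i * c :=
    mul_le_mul_of_nonneg_right (alphaMin_le E i) hc
  linarith

lemma pull_high_self {i : V} {t : ℕ} (ht : 1 ≤ t) (hi : i ∉ F)
    {m c : ℝ} (hc : 0 ≤ c) (hm : Umax exec (t - 1) ≤ m)
    (hs : exec.state i (t - 1) ≤ m - c) :
    exec.state i t ≤ m - alphaMin E * c := by
  rw [exec.update t ht i hi]
  have h := avg_le (middleWeight E i) m c (exec.Ms t i)
    (exec.w t i) (exec.state i (t - 1)) (middleWeight_mul exec ht hi)
    (middleWeight_pos E i) (fun j hj => le_trans (w_high exec hd hF ht hi hj) hm)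
    hs hc
  have h2 : alphaMin E * c ≤ middleWeight E i * c :=
    mul_le_mul_of_nonneg_right (alphaMin_le E i) hc
  linarith

lemma pull_low_nbr {i : V} {t : ℕ} (ht : 1 ≤ t) (hi : i ∉ F)
    (A : Finset V) (hAhon : ∀ a ∈ A, a ∉ F)
    (hcard : (NinSet E i).card < 3 * ((NinSet E i) ∩ A).card)
    {m c : ℝ} (hc : 0 ≤ c) (hm : m ≤ muMin exec (t - 1))
    (hval : ∀ a ∈ A, m + c ≤ exec.state a (t - 1)) :
    m + alphaMin E * c ≤ exec.state i t := by
  obtain ⟨j0, hj0M, hj0w⟩ := key_low exec ht hi A hAhon hcard (m + c) hval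
  rw [exec.update t ht i hi]
  have h := avg_ge' (middleWeight E i) m c (exec.Ms t i)
    (exec.w t i) (exec.state i (t - 1)) (middleWeight_mul exec ht hi)
    (middleWeight_pos E i) hj0M hj0w
    (fun j hj => le_trans hm (w_low exec hd hF ht hi hj))
    (le_trans hm (muMin_le_state exec (t - 1) i hi)) hc
  have h2 : alphaMin E * c ≤ middleWeight E i * c :=
    mul_le_mul_of_nonneg_right (alphaMin_le E i) hc
  linarith

lemma pull_high_nbr {i : V} {t : ℕ} (ht : 1 ≤ t) (hi : i ∉ F)
    (A : Finset V) (hAhon : ∀ a ∈ A, a ∉ F)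
    (hcard : (NinSet E i).card < 3 * ((NinSet E i) ∩ A).card)
    {m c : ℝ} (hc : 0 ≤ c) (hm : Umax exec (t - 1) ≤ m)
    (hval : ∀ a ∈ A, exec.state a (t - 1) ≤ m - c) :
    exec.state i t ≤ m - alphaMin E * c := by
  obtain ⟨j0, hj0M, hj0w⟩ := key_high exec ht hi A hAhon hcard (m - c) hval
  rw [exec.update t ht i hi]
  have h := avg_le' (middleWeight E i) m c (exec.Ms t i)
    (exec.w t i) (exec.state i (t - 1)) (middleWeight_mul exec ht hi)
    (middleWeight_pos E i) hj0M hj0w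
    (fun j hj => le_trans (w_high exec hd hF ht hi hj) hm)
    (le_trans (state_le_Umax exec (t - 1) i hi) hm) hc
  have h2 : alphaMin E * c ≤ middleWeight E i * c :=
    mul_le_mul_of_nonneg_right (alphaMin_le E i) hc
  linarith

end AuxPull
section Contraction

variable {E : Finset (V × V)} {F : Finset V} {f : ℕ}

lemma contraction (exec : MiddleExec E F)
    (hd : ∀ v : V, 3 * f ≤ (NinSet E v).card)
    (hsuff : SuffCond E f) (hF : F.card ≤ f)
    [Nonempty V] [Nonempty {i : V // i ∉ F}] (t : ℕ) :
    Umax exec (t + 2 * Fintype.card V) - muMin exec (t + 2 * Fintype.card V) ≤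
      (1 - alphaMin E ^ (2 * Fintype.card V) / 2) * (Umax exec t - muMin exec t) := by
  classical
  have hα0 : 0 < alphaMin E := alphaMin_pos E
  have hα1 : alphaMin E ≤ 1 := alphaMin_le_one E
  set α := alphaMin E with hαdef
  set l := 2 * Fintype.card V with hldef
  set m := muMin exec t with hmdef
  set U := Umax exec t with hUdef
  have hΔ0 : 0 ≤ U - m := sub_nonneg.mpr (muMin_le_Umax exec hd hF t)
  set Δ := U - m with hΔdef
  set eps : ℕ → ℝ := fun τ => α ^ τ * (Δ / 2) with heps
  have heps0 : ∀ τ, 0 ≤ eps τ := fun τ => by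
    have : (0:ℝ) ≤ α ^ τ := pow_nonneg hα0.le τ
    simp only [heps]
    nlinarith
  have hepsle : ∀ τ, eps τ ≤ Δ / 2 := fun τ => by
    have h1 : α ^ τ ≤ 1 := pow_le_one₀ hα0.le hα1
    have h2 : (0:ℝ) ≤ Δ / 2 := by linarith
    simpa only [heps] using mul_le_of_le_one_left h2 h1
  have hepssucc : ∀ τ, eps (τ + 1) = α * eps τ := fun τ => by
    simp only [heps, pow_succ]; ring
  set A : ℕ → Finset V :=
    fun τ => univ.filter (fun i => i ∉ F ∧ m + eps τ ≤ exec.state i (t + τ)) with hAdef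
  set B : ℕ → Finset V :=
    fun τ => univ.filter (fun i => i ∉ F ∧ exec.state i (t + τ) ≤ U - eps τ) with hBdef
  set S : Finset V := univ.filter (fun i => i ∉ F) with hSdef
  have hmemA : ∀ τ i, i ∈ A τ ↔ (i ∉ F ∧ m + eps τ ≤ exec.state i (t + τ)) := by
    intro τ i; simp [hAdef]
  have hmemB : ∀ τ i, i ∈ B τ ↔ (i ∉ F ∧ exec.state i (t + τ) ≤ U - eps τ) := by
    intro τ i; simp [hBdef]
  have hmemS : ∀ i, i ∈ S ↔ i ∉ F := by intro i; simp [hSdef]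
  have hSA : ∀ τ, A τ ⊆ S := fun τ i hi => (hmemS i).mpr ((hmemA τ i).mp hi).1
  have hSB : ∀ τ, B τ ⊆ S := fun τ i hi => (hmemS i).mpr ((hmemB τ i).mp hi).1
  have hcover : ∀ τ i, i ∉ F → i ∈ A τ ∨ i ∈ B τ := by
    intro τ i hiF
    by_cases hc : m + eps τ ≤ exec.state i (t + τ)
    · exact Or.inl ((hmemA τ i).mpr ⟨hiF, hc⟩)
    · push_neg at hc
      refine Or.inr ((hmemB τ i).mpr ⟨hiF, ?_⟩)
      have := hepsle τ
      linarith
  have hmonoA : ∀ τ, A τ ⊆ A (τ + 1) := by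
    intro τ i hi
    obtain ⟨hiF, hival⟩ := (hmemA τ i).mp hi
    refine (hmemA (τ + 1) i).mpr ⟨hiF, ?_⟩
    have hmu' : m ≤ muMin exec ((t + τ + 1) - 1) := by
      simpa using muMin_monotone exec hd hF (Nat.le_add_right t τ)
    have hs' : m + eps τ ≤ exec.state i ((t + τ + 1) - 1) := by simpa using hival
    have hres := pull_low_self exec hd hF (show 1 ≤ t + τ + 1 by omega) hiF
      (heps0 τ) hmu' hs'
    rw [hepssucc τ]
    exact hres
  have hmonoB : ∀ τ, B τ ⊆ B (τ + 1) := by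
    intro τ i hi
    obtain ⟨hiF, hival⟩ := (hmemB τ i).mp hi
    refine (hmemB (τ + 1) i).mpr ⟨hiF, ?_⟩
    have hmu' : Umax exec ((t + τ + 1) - 1) ≤ U := by
      simpa using Umax_antitone exec hd hF (Nat.le_add_right t τ)
    have hs' : exec.state i ((t + τ + 1) - 1) ≤ U - eps τ := by simpa using hival
    have hres := pull_high_self exec hd hF (show 1 ≤ t + τ + 1 by omega) hiF
      (heps0 τ) hmu' hs'
    rw [hepssucc τ]
    exact hres
  have hgrow : ∀ τ, A τ ≠ S → B τ ≠ S →
      (A τ).card + (B τ).card + 1 ≤ (A (τ + 1)).card + (B (τ + 1)).card := by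
    intro τ hAne hBne
    have hLne : (S \ A τ).Nonempty := by
      rw [sdiff_nonempty]
      exact fun hsub => hAne (subset_antisymm (hSA τ) hsub)
    have hRne : (S \ B τ).Nonempty := by
      rw [sdiff_nonempty]
      exact fun hsub => hBne (subset_antisymm (hSB τ) hsub)
    have hunion : F ∪ (S \ A τ) ∪ (A τ ∩ B τ) ∪ (S \ B τ) = univ := by
      ext v
      simp only [mem_union, Finset.mem_sdiff, mem_inter, mem_univ, iff_true]
      by_cases hvF : v ∈ F
      · tauto
      · have hv := hcover τ v hvF
        have hvS : v ∈ S := (hmemS v).mpr hvF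
        by_cases hvA : v ∈ A τ <;> by_cases hvB : v ∈ B τ <;> tauto
    have hd1 : Disjoint F (S \ A τ) := disjoint_left.mpr
      (fun {v} hvF hv => ((hmemS _).mp (Finset.mem_sdiff.mp hv).1) hvF)
    have hd2 : Disjoint F (A τ ∩ B τ) := disjoint_left.mpr
      (fun {v} hvF hv => ((hmemA τ _).mp (mem_inter.mp hv).1).1 hvF)
    have hd3 : Disjoint F (S \ B τ) := disjoint_left.mpr
      (fun {v} hvF hv => ((hmemS _).mp (Finset.mem_sdiff.mp hv).1) hvF)
    have hd4 : Disjoint (S \ A τ) (A τ ∩ B τ) := disjoint_left.mpr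
      (fun {v} hv hv' => (Finset.mem_sdiff.mp hv).2 (mem_inter.mp hv').1)
    have hd5 : Disjoint (S \ A τ) (S \ B τ) := by
      rw [disjoint_left]
      intro v hv hv'
      have h1 := Finset.mem_sdiff.mp hv
      have h2 := Finset.mem_sdiff.mp hv'
      rcases hcover τ v ((hmemS v).mp h1.1) with h | h
      · exact h1.2 h
      · exact h2.2 h
    have hd6 : Disjoint (A τ ∩ B τ) (S \ B τ) := disjoint_left.mpr
      (fun {v} hv hv' => (Finset.mem_sdiff.mp hv').2 (mem_inter.mp hv).2)
    rcases hsuff.2 F (S \ A τ) (A τ ∩ B τ) (S \ B τ) hunion hd1 hd2 hd3 hd4 hd5 hd6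
      hLne hRne hF with h | h
    · -- C ∪ R = A τ pulls up a new node
      have hCR : (A τ ∩ B τ) ∪ (S \ B τ) = A τ := by
        ext v
        simp only [mem_union, mem_inter, Finset.mem_sdiff]
        constructor
        · rintro (⟨h1, _⟩ | ⟨h1, h2⟩)
          · exact h1
          · rcases hcover τ v ((hmemS v).mp h1) with hA' | hB'
            · exact hA'
            · exact absurd hB' h2
        · intro hvA
          by_cases hvB : v ∈ B τ
          · exact Or.inl ⟨hvA, hvB⟩
          · exact Or.inr ⟨(hSA τ) hvA, hvB⟩
      rw [hCR] at h
      obtain ⟨v, hvL, hvcard⟩ := h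
      have hvS := (Finset.mem_sdiff.mp hvL).1
      have hvA := (Finset.mem_sdiff.mp hvL).2
      have hvF : v ∉ F := (hmemS v).mp hvS
      have hvnew : v ∈ A (τ + 1) := by
        refine (hmemA (τ + 1) v).mpr ⟨hvF, ?_⟩
        have hmu' : m ≤ muMin exec ((t + τ + 1) - 1) := by
          simpa using muMin_monotone exec hd hF (Nat.le_add_right t τ)
        have hvals : ∀ a ∈ A τ, m + eps τ ≤ exec.state a ((t + τ + 1) - 1) := by
          intro a ha
          simpa using ((hmemA τ a).mp ha).2
        have hres := pull_low_nbr exec hd hF (show 1 ≤ t + τ + 1 by omega) hvF (A τ)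
          (fun a ha => ((hmemA τ a).mp ha).1) hvcard (heps0 τ) hmu' hvals
        rw [hepssucc τ]
        exact hres
      have hssub : A τ ⊂ A (τ + 1) :=
        (Finset.ssubset_iff_of_subset (hmonoA τ)).mpr ⟨v, hvnew, hvA⟩
      have h1 := Finset.card_lt_card hssub
      have h2 := card_le_card (hmonoB τ)
      omega
    · -- L ∪ C = B τ pulls down a new node
      have hLC : (S \ A τ) ∪ (A τ ∩ B τ) = B τ := by
        ext v
        simp only [mem_union, mem_inter, Finset.mem_sdiff]
        constructor
        · rintro (⟨h1, h2⟩ | ⟨_, h2⟩)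
          · rcases hcover τ v ((hmemS v).mp h1) with hA' | hB'
            · exact absurd hA' h2
            · exact hB'
          · exact h2
        · intro hvB
          by_cases hvA : v ∈ A τ
          · exact Or.inr ⟨hvA, hvB⟩
          · exact Or.inl ⟨(hSB τ) hvB, hvA⟩
      rw [hLC] at h
      obtain ⟨v, hvR, hvcard⟩ := h
      have hvS := (Finset.mem_sdiff.mp hvR).1
      have hvB := (Finset.mem_sdiff.mp hvR).2
      have hvF : v ∉ F := (hmemS v).mp hvS
      have hvnew : v ∈ B (τ + 1) := by
        refine (hmemB (τ + 1) v).mpr ⟨hvF, ?_⟩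
        have hmu' : Umax exec ((t + τ + 1) - 1) ≤ U := by
          simpa using Umax_antitone exec hd hF (Nat.le_add_right t τ)
        have hvals : ∀ a ∈ B τ, exec.state a ((t + τ + 1) - 1) ≤ U - eps τ := by
          intro a ha
          simpa using ((hmemB τ a).mp ha).2
        have hres := pull_high_nbr exec hd hF (show 1 ≤ t + τ + 1 by omega) hvF (B τ)
          (fun a ha => ((hmemB τ a).mp ha).1) hvcard (heps0 τ) hmu' hvals
        rw [hepssucc τ]
        exact hres
      have hssub : B τ ⊂ B (τ + 1) :=
        (Finset.ssubset_iff_of_subset (hmonoB τ)).mpr ⟨v, hvnew, hvB⟩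
      have h1 := Finset.card_lt_card hssub
      have h2 := card_le_card (hmonoA τ)
      omega
  have hfull : ∀ τ, (A τ = S ∨ B τ = S) ∨ τ + 2 ≤ (A τ).card + (B τ).card := by
    intro τ
    induction τ with
    | zero =>
      right
      obtain ⟨i0, hmax⟩ := Finite.exists_max (fun i : {i : V // i ∉ F} => exec.state i.1 t)
      obtain ⟨j0, hmin⟩ := Finite.exists_min (fun i : {i : V // i ∉ F} => exec.state i.1 t)
      have hU0 : U ≤ exec.state i0.1 t := by
        rw [hUdef]; unfold Umax; exact ciSup_le hmax
      have hm0 : exec.state j0.1 t ≤ m := by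
        rw [hmdef]; unfold muMin; exact le_ciInf hmin
      have heq0 : eps 0 = Δ / 2 := by simp [heps]
      have hi0 : i0.1 ∈ A 0 := by
        refine (hmemA 0 i0.1).mpr ⟨i0.2, ?_⟩
        simp only [Nat.add_zero]
        rw [heq0]
        linarith
      have hj0 : j0.1 ∈ B 0 := by
        refine (hmemB 0 j0.1).mpr ⟨j0.2, ?_⟩
        simp only [Nat.add_zero]
        rw [heq0]
        linarith
      have hc1 := card_pos.mpr ⟨i0.1, hi0⟩
      have hc2 := card_pos.mpr ⟨j0.1, hj0⟩
      omega
    | succ τ ih =>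
      have hstepA : A τ = S → A (τ + 1) = S := fun hA' =>
        subset_antisymm (hSA _) (hA' ▸ hmonoA τ)
      have hstepB : B τ = S → B (τ + 1) = S := fun hB' =>
        subset_antisymm (hSB _) (hB' ▸ hmonoB τ)
      rcases ih with (hA' | hB') | hcards
      · exact Or.inl (Or.inl (hstepA hA'))
      · exact Or.inl (Or.inr (hstepB hB'))
      · by_cases hA' : A τ = S
        · exact Or.inl (Or.inl (hstepA hA'))
        · by_cases hB' : B τ = S
          · exact Or.inl (Or.inr (hstepB hB'))
          · exact Or.inr (by have := hgrow τ hA' hB'; omega)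
  have hUb : Umax exec (t + l) ≤ U := Umax_antitone exec hd hF (Nat.le_add_right t l)
  have hmb : m ≤ muMin exec (t + l) := muMin_monotone exec hd hF (Nat.le_add_right t l)
  have hrhs : (1 - α ^ l / 2) * Δ = Δ - α ^ l * (Δ / 2) := by ring
  rcases hfull l with (hAfull | hBfull) | hbad
  · have hmu : m + eps l ≤ muMin exec (t + l) := by
      unfold muMin
      apply le_ciInf
      rintro ⟨i, hi⟩
      have hiA : i ∈ A l := by rw [hAfull]; exact (hmemS i).mpr hi
      exact ((hmemA l i).mp hiA).2
    rw [hrhs]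
    have : eps l = α ^ l * (Δ / 2) := by simp [heps]
    linarith [this ▸ hmu]
  · have hUmax : Umax exec (t + l) ≤ U - eps l := by
      unfold Umax
      apply ciSup_le
      rintro ⟨i, hi⟩
      have hiB : i ∈ B l := by rw [hBfull]; exact (hmemS i).mpr hi
      exact ((hmemB l i).mp hiB).2
    rw [hrhs]
    have : eps l = α ^ l * (Δ / 2) := by simp [heps]
    linarith [this ▸ hUmax]
  · exfalso
    have h1 : (A l).card ≤ S.card := card_le_card (hSA l)
    have h2 : (B l).card ≤ S.card := card_le_card (hSB l)
    have h3 : S.card ≤ Fintype.card V := card_le_univ S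
    omega
end Contraction
/-- convergence of the Middle algorithm. -/
theorem middle_convergence
    (E : Finset (V × V)) (f : ℕ)
    (hn : 2 ≤ Fintype.card V)
    (hloop : ∀ v : V, (v, v) ∉ E)
    (hsuff : SuffCond E f)
    (F : Finset V) (hF : F.card ≤ f)
    (exec : MiddleExec E F) :
    Filter.Tendsto (fun t => Umax exec t - muMin exec t) Filter.atTop (nhds 0) := by
  classical
  have hV : Nonempty V := Fintype.card_pos_iff.mp (by omega)
  by_cases hne : ∃ i : V, i ∉ F
  · obtain ⟨i0, hi0⟩ := hne
    haveI : Nonempty {i : V // i ∉ F} := ⟨⟨i0, hi0⟩⟩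
    have hd := hsuff.1
    have hα0 : 0 < alphaMin E := alphaMin_pos E
    have hα1 : alphaMin E ≤ 1 := alphaMin_le_one E
    set l := 2 * Fintype.card V with hldef
    have hl0 : 0 < l := by omega
    set q : ℝ := 1 - alphaMin E ^ l / 2 with hqdef
    have hαl0 : 0 < alphaMin E ^ l := pow_pos hα0 l
    have hαl1 : alphaMin E ^ l ≤ 1 := pow_le_one₀ hα0.le hα1
    have hq0 : 0 ≤ q := by rw [hqdef]; linarith
    have hq1 : q < 1 := by rw [hqdef]; linarith
    set gap : ℕ → ℝ := fun t => Umax exec t - muMin exec t with hgap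
    have hgap0 : ∀ t, 0 ≤ gap t := fun t => sub_nonneg.mpr (muMin_le_Umax exec hd hF t)
    have hanti : Antitone gap := by
      apply antitone_nat_of_succ_le
      intro t
      have h1 := Umax_antitone exec hd hF (Nat.le_succ t)
      have h2 := muMin_monotone exec hd hF (Nat.le_succ t)
      simp only [hgap]
      linarith
    have hcontr : ∀ t, gap (t + l) ≤ q * gap t := fun t => contraction exec hd hsuff hF t
    have hiter : ∀ k, gap (k * l) ≤ q ^ k * gap 0 := by
      intro k
      induction k with
      | zero => simp
      | succ k ih =>
        have h1 : (k + 1) * l = k * l + l := by ring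
        rw [h1]
        calc gap (k * l + l) ≤ q * gap (k * l) := hcontr (k * l)
        _ ≤ q * (q ^ k * gap 0) := mul_le_mul_of_nonneg_left ih hq0
        _ = q ^ (k + 1) * gap 0 := by ring
    have hbound : ∀ t, gap t ≤ q ^ (t / l) * gap 0 := by
      intro t
      have h1 : t / l * l ≤ t := Nat.div_mul_le_self t l
      exact le_trans (hanti h1) (hiter (t / l))
    have hdiv : Tendsto (fun t : ℕ => t / l) atTop atTop := by
      apply tendsto_atTop_atTop.mpr
      intro b
      exact ⟨b * l, fun t ht => (Nat.le_div_iff_mul_le hl0).mpr ht⟩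
    have htend : Tendsto (fun t : ℕ => q ^ (t / l) * gap 0) atTop (nhds 0) := by
      have h1 : Tendsto (fun k : ℕ => q ^ k * gap 0) atTop (nhds (0 * gap 0)) :=
        (tendsto_pow_atTop_nhds_zero_of_lt_one hq0 hq1).mul_const (gap 0)
      rw [zero_mul] at h1
      exact h1.comp hdiv
    exact squeeze_zero hgap0 hbound htend
  · push_neg at hne
    haveI : IsEmpty {i : V // i ∉ F} := ⟨fun x => x.2 (hne x.1)⟩
    have hz : (fun t => Umax exec t - muMin exec t) = fun _ => (0:ℝ) := by
      funext t
      unfold Umax muMin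
      rw [Real.iSup_of_isEmpty, Real.iInf_of_isEmpty, sub_zero]
    rw [hz]
    exact tendsto_const_nhds
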